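/- Let g : ℝ^d → ℝ be sublinear and nonnegative, σ ∈ ℝ^d, let Σ ∈ ℝ^{d×m}, b ∈ ℝ^m, and let the uncertainty set be U = {ζ ∈ ℝ^m : there exists ξ ∈ ℝ^q with D₁ζ + D₂ξ ≤ d componentwise}, where D₁ ∈ ℝ^{r×m}, D₂ ∈ ℝ^{r×q} and d ∈ ℝ^r. Suppose there exist v ∈ ℝ^r and a matrix V ∈ ℝ^{d×r} with columns V_1, …, V_r such that (i) g(σ − V d) + ⟨d, v⟩ ≤ 1, (ii) g(V_i) ≤ v_i for all i = 1, …, r, (iii) D₁ᵀ v = b, (iv) D₂ᵀ v = 0, (v) V D₁ + Σ = 0, and (vi) V D₂ = 0. Then for every ζ ∈ U, g(σ + Σζ) ≤ 1 − ⟨b, ζ⟩. -/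

import Mathlib

open Matrix

/-- Roos et al. safe approximation for a general polyhedral uncertainty set
`U = {ζ | ∃ ξ, D₁ ζ + D₂ ξ ≤ d}`: feasibility of the auxiliary system `(v, V)` implies the
robust constraint `g (σ + Σ ζ) ≤ 1 - ⟨b, ζ⟩` for all `ζ ∈ U`. -/
theorem roos_approximation_polyhedral {dd m q r : ℕ}
    (g : (Fin dd → ℝ) → ℝ)
    (hg_add : ∀ x y, g (x + y) ≤ g x + g y)
    (hg_smul : ∀ t : ℝ, 0 ≤ t → ∀ x, g (t • x) = t * g x)
    (hg_nonneg : ∀ x, 0 ≤ g x)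
    (σ : Fin dd → ℝ) (S : Matrix (Fin dd) (Fin m) ℝ) (b : Fin m → ℝ)
    (D₁ : Matrix (Fin r) (Fin m) ℝ) (D₂ : Matrix (Fin r) (Fin q) ℝ) (d : Fin r → ℝ)
    (v : Fin r → ℝ) (V : Matrix (Fin dd) (Fin r) ℝ)
    (h1 : g (σ - V *ᵥ d) + d ⬝ᵥ v ≤ 1)
    (h2 : ∀ i : Fin r, g (fun k => V k i) ≤ v i)
    (h3 : D₁ᵀ *ᵥ v = b)
    (h4 : D₂ᵀ *ᵥ v = 0)
    (h5 : V * D₁ + S = 0)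
    (h6 : V * D₂ = 0) :
    ∀ ζ : Fin m → ℝ, (∃ ξ : Fin q → ℝ, ∀ i : Fin r, (D₁ *ᵥ ζ + D₂ *ᵥ ξ) i ≤ d i) →
      g (σ + S *ᵥ ζ) ≤ 1 - b ⬝ᵥ ζ := by
  rintro ζ ⟨ξ, hξ⟩
  set w : Fin r → ℝ := d - (D₁ *ᵥ ζ + D₂ *ᵥ ξ) with hw_def
  have hw : ∀ i, 0 ≤ w i := fun i => by
    simp only [hw_def, Pi.sub_apply]; linarith [hξ i]
  -- key subadditivity bound
  have key : ∀ s : Finset (Fin r),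
      g (∑ i ∈ s, w i • (fun k => V k i)) ≤ ∑ i ∈ s, w i * v i := by
    intro s
    induction s using Finset.induction with
    | empty =>
        simp only [Finset.sum_empty]
        have : g 0 = 0 := by
          have := hg_smul 0 le_rfl 0
          simpa using this
        simp [this]
    | insert _ _ hni ih =>
        rename_i a s'
        rw [Finset.sum_insert hni, Finset.sum_insert hni]
        calc g (w a • (fun k => V k a) + ∑ i ∈ s', w i • (fun k => V k i))
            ≤ g (w a • (fun k => V k a)) + g (∑ i ∈ s', w i • (fun k => V k i)) :=
              hg_add _ _
          _ ≤ w a * v a + ∑ i ∈ s', w i * v i := by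
              have h := hg_smul (w a) (hw a) (fun k => V k a)
              have := mul_le_mul_of_nonneg_left (h2 a) (hw a)
              refine add_le_add ?_ ih
              rw [h]; exact this
  have hsum : V *ᵥ w = ∑ i : Fin r, w i • (fun k => V k i) := by
    funext k
    simp [mulVec, dotProduct, Finset.sum_apply, mul_comm]
  -- rewrite σ + S ζ
  have hS : S = -(V * D₁) := by
    have h5' := h5
    rw [add_comm] at h5'
    exact eq_neg_of_add_eq_zero_left h5'
  have hD2 : V *ᵥ (D₂ *ᵥ ξ) = 0 := by
    rw [mulVec_mulVec, h6]; simp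
  have hrw : σ + S *ᵥ ζ = (σ - V *ᵥ d) + V *ᵥ w := by
    rw [hS, hw_def]
    simp only [mulVec_sub, mulVec_add, neg_mulVec, ← mulVec_mulVec, hD2]
    funext k; simp [Pi.add_apply, Pi.sub_apply, Pi.neg_apply]; ring
  have hdot : ∑ i : Fin r, w i * v i = d ⬝ᵥ v - b ⬝ᵥ ζ := by
    have e1 : (D₁ *ᵥ ζ) ⬝ᵥ v = b ⬝ᵥ ζ := by
      rw [← h3, mulVec_transpose, ← dotProduct_mulVec, dotProduct_comm]
    have e2 : (D₂ *ᵥ ξ) ⬝ᵥ v = 0 := by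
      rw [dotProduct_comm, dotProduct_mulVec, ← mulVec_transpose, h4]
      simp
    have : w ⬝ᵥ v = d ⬝ᵥ v - b ⬝ᵥ ζ := by
      rw [hw_def]
      rw [sub_dotProduct, add_dotProduct, e1, e2]
      ring
    simpa [dotProduct] using this
  calc g (σ + S *ᵥ ζ) = g ((σ - V *ᵥ d) + V *ᵥ w) := by rw [hrw]
    _ ≤ g (σ - V *ᵥ d) + g (V *ᵥ w) := hg_add _ _
    _ ≤ g (σ - V *ᵥ d) + ∑ i : Fin r, w i * v i := by
        rw [hsum]; exact add_le_add (le_refl _) (key Finset.univ)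
    _ = g (σ - V *ᵥ d) + d ⬝ᵥ v - b ⬝ᵥ ζ := by rw [hdot]; ring
    _ ≤ 1 - b ⬝ᵥ ζ := by linarith
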